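/- arXiv:2503.17838 — 2 statements merged into one kernel-verified Lean document; each statement's English description precedes it below -/
import Mathlib

section
/- Let c2 > 1 and define ω0, ν0, λ0, κ1, κ2 as in the linearized ERTBP, and additionally set d0000 = (ν0² − ω0²)/κ1 and κ3 = (κ2/κ1)·(ν0² − ω0²)/(ν0² + λ0²). Let η, α1, α2, φ1, φ2 ∈ ℝ and α3, φ3 ∈ ℂ, and define x(f) = α1·cos(ω0·f + φ1) + α3·cos(i·λ0·f + φ3), y(f) = κ1·α1·sin(ω0·f + φ1) + i·κ2·α3·sin(i·λ0·f + φ3), z(f) = α2·sin(ν0·f + φ2) + η·α1·sin(ω0·f + φ1) + i·η·κ3·α3·sin(i·λ0·f + φ3). Then for all f ∈ ℝ: x''(f) − 2y'(f) − (1+2c2)·x(f) = 0, y''(f) + 2x'(f) + (c2−1)·y(f) = 0, and z''(f) + c2·z(f) = η·d0000·y(f). (This is the modified linear solution for the coupling of the y-direction motion into the z-direction, associated with the breaking of the S2-type symmetry.) -/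
private lemma key_cos (a b c : ℂ) (f : ℝ) :
    HasDerivAt (fun t : ℝ => a * Complex.cos (b * t + c))
      (-(a * b) * Complex.sin (b * f + c)) f := by
  have hbc : HasDerivAt (fun w : ℂ => b * w + c) b (f : ℂ) := by
    simpa using ((hasDerivAt_id ((f : ℂ))).const_mul b).add_const c
  have h := (((Complex.hasDerivAt_cos (b * (f : ℂ) + c)).comp (f : ℂ) hbc).const_mul a).comp_ofReal
  have e : -(a * b) * Complex.sin (b * (f:ℂ) + c) = a * (-Complex.sin (b * (f:ℂ) + c) * b) := by
    ring
  rw [e]; exact h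

private lemma key_sin (a b c : ℂ) (f : ℝ) :
    HasDerivAt (fun t : ℝ => a * Complex.sin (b * t + c))
      (a * b * Complex.cos (b * f + c)) f := by
  have hbc : HasDerivAt (fun w : ℂ => b * w + c) b (f : ℂ) := by
    simpa using ((hasDerivAt_id ((f : ℂ))).const_mul b).add_const c
  have h := (((Complex.hasDerivAt_sin (b * (f : ℂ) + c)).comp (f : ℂ) hbc).const_mul a).comp_ofReal
  have e : a * b * Complex.cos (b * (f:ℂ) + c) = a * (Complex.cos (b * (f:ℂ) + c) * b) := by
    ring
  rw [e]; exact h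

/-- The modified linear solution for the coupling of the y-direction motion
into the z-direction (associated with the breaking of the S2-type symmetry)
solves the modified linear system `x'' − 2y' − (1+2c2)x = 0`,
`y'' + 2x' + (c2−1)y = 0`, `z'' + c2·z = η·d0000·y`. -/
theorem ertbp_modified_linear_solution_y_to_z (c2 : ℝ) (hc2 : 1 < c2)
    (ω0 ν0 lam0 κ1 κ2 κ3 d0000 : ℝ)
    (hω0 : ω0 = Real.sqrt ((2 - c2 + Real.sqrt (9 * c2 ^ 2 - 8 * c2)) / 2))
    (hν0 : ν0 = Real.sqrt c2)
    (hlam0 : lam0 = Real.sqrt ((c2 - 2 + Real.sqrt (9 * c2 ^ 2 - 8 * c2)) / 2))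
    (hκ1 : κ1 = -(ω0 ^ 2 + 2 * c2 + 1) / (2 * ω0))
    (hκ2 : κ2 = -(lam0 ^ 2 - 2 * c2 - 1) / (2 * lam0))
    (hd : d0000 = (ν0 ^ 2 - ω0 ^ 2) / κ1)
    (hκ3 : κ3 = (κ2 / κ1) * ((ν0 ^ 2 - ω0 ^ 2) / (ν0 ^ 2 + lam0 ^ 2)))
    (η α1 α2 φ1 φ2 : ℝ) (α3 φ3 : ℂ) (x y z : ℝ → ℂ)
    (hx : x = fun f : ℝ =>
      (α1 : ℂ) * Complex.cos ((ω0 : ℂ) * f + (φ1 : ℂ))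
        + α3 * Complex.cos (Complex.I * (lam0 : ℂ) * f + φ3))
    (hy : y = fun f : ℝ =>
      (κ1 : ℂ) * (α1 : ℂ) * Complex.sin ((ω0 : ℂ) * f + (φ1 : ℂ))
        + Complex.I * (κ2 : ℂ) * α3 * Complex.sin (Complex.I * (lam0 : ℂ) * f + φ3))
    (hz : z = fun f : ℝ =>
      (α2 : ℂ) * Complex.sin ((ν0 : ℂ) * f + (φ2 : ℂ))
        + (η : ℂ) * (α1 : ℂ) * Complex.sin ((ω0 : ℂ) * f + (φ1 : ℂ))
        + Complex.I * (η : ℂ) * (κ3 : ℂ) * α3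
            * Complex.sin (Complex.I * (lam0 : ℂ) * f + φ3)) :
    ∀ f : ℝ,
      deriv (deriv x) f - 2 * deriv y f - (1 + 2 * (c2 : ℂ)) * x f = 0 ∧
      deriv (deriv y) f + 2 * deriv x f + ((c2 : ℂ) - 1) * y f = 0 ∧
      deriv (deriv z) f + (c2 : ℂ) * z f = (η : ℂ) * (d0000 : ℂ) * y f := by
  -- basic real facts
  set s := Real.sqrt (9 * c2 ^ 2 - 8 * c2) with hs
  have hs_nn : 0 ≤ s := Real.sqrt_nonneg _
  have hs2 : s ^ 2 = 9 * c2 ^ 2 - 8 * c2 := Real.sq_sqrt (by nlinarith)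
  have hsgt1 : 2 - c2 + s > 0 := by nlinarith [hs2, hs_nn]
  have hsgt2 : c2 - 2 + s > 0 := by nlinarith [hs2, hs_nn]
  have hω2 : ω0 ^ 2 = (2 - c2 + s) / 2 := by
    rw [hω0]; exact Real.sq_sqrt (by linarith)
  have hl2 : lam0 ^ 2 = (c2 - 2 + s) / 2 := by
    rw [hlam0]; exact Real.sq_sqrt (by linarith)
  have hν2 : ν0 ^ 2 = c2 := by rw [hν0]; exact Real.sq_sqrt (by linarith)
  have hωpos : 0 < ω0 := by rw [hω0]; exact Real.sqrt_pos.mpr (by linarith)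
  have hlpos : 0 < lam0 := by rw [hlam0]; exact Real.sqrt_pos.mpr (by linarith)
  have hωne : ω0 ≠ 0 := hωpos.ne'
  have hlne : lam0 ≠ 0 := hlpos.ne'
  have hκ1ne : κ1 ≠ 0 := by
    rw [hκ1]
    have h1 : -(ω0 ^ 2 + 2 * c2 + 1) < 0 := by nlinarith [sq_nonneg ω0]
    have h2 : (0:ℝ) < 2 * ω0 := by linarith
    exact ne_of_lt (div_neg_of_neg_of_pos h1 h2)
  have hden : c2 + lam0 ^ 2 ≠ 0 := ne_of_gt (by nlinarith [sq_nonneg lam0])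
  -- key polynomial identities
  have P1 : ω0 ^ 4 + (c2 - 2) * ω0 ^ 2 + (1 - c2) * (2 * c2 + 1) = 0 := by
    linear_combination (ω0 ^ 2 + (2 - c2 + s) / 2 + (c2 - 2)) * hω2 + (1/4) * hs2
  have P2 : lam0 ^ 4 - (c2 - 2) * lam0 ^ 2 - (2 * c2 + 1) * (c2 - 1) = 0 := by
    linear_combination (lam0 ^ 2 + (c2 - 2 + s) / 2 - (c2 - 2)) * hl2 + (1/4) * hs2
  have R1 : κ1 * (2 * ω0) = -(ω0 ^ 2 + 2 * c2 + 1) := by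
    rw [hκ1]; field_simp
  have R2 : κ2 * (2 * lam0) = -(lam0 ^ 2 - 2 * c2 - 1) := by
    rw [hκ2]; field_simp
  have R3 : κ1 * (c2 - 1 - ω0 ^ 2) = 2 * ω0 := by
    have h2 : (2 * ω0) ≠ 0 := by positivity
    rw [hκ1, div_mul_eq_mul_div, div_eq_iff h2]
    linear_combination P1
  have R4 : κ2 * (lam0 ^ 2 + c2 - 1) = 2 * lam0 := by
    have h2 : (2 * lam0) ≠ 0 := by positivity
    rw [hκ2, div_mul_eq_mul_div, div_eq_iff h2]
    linear_combination -P2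
  have R6 : d0000 * κ1 = ν0 ^ 2 - ω0 ^ 2 := by
    rw [hd]; field_simp
  have R7 : κ3 * (lam0 ^ 2 + c2) = d0000 * κ2 := by
    rw [hκ3, hd, hν2]
    field_simp
    ring
  -- complex casts
  have C1c : (κ1:ℂ) * (2 * (ω0:ℂ)) = -((ω0:ℂ) ^ 2 + 2 * (c2:ℂ) + 1) := by
    exact_mod_cast R1
  have C2c : (κ2:ℂ) * (2 * (lam0:ℂ)) = -((lam0:ℂ) ^ 2 - 2 * (c2:ℂ) - 1) := by
    exact_mod_cast R2
  have C3c : (κ1:ℂ) * ((c2:ℂ) - 1 - (ω0:ℂ) ^ 2) = 2 * (ω0:ℂ) := by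
    exact_mod_cast R3
  have C4c : (κ2:ℂ) * ((lam0:ℂ) ^ 2 + (c2:ℂ) - 1) = 2 * (lam0:ℂ) := by
    exact_mod_cast R4
  have C5c : (ν0:ℂ) ^ 2 = (c2:ℂ) := by exact_mod_cast hν2
  have C6c : (d0000:ℂ) * (κ1:ℂ) = (ν0:ℂ) ^ 2 - (ω0:ℂ) ^ 2 := by exact_mod_cast R6
  have C7c : (κ3:ℂ) * ((lam0:ℂ) ^ 2 + (c2:ℂ)) = (d0000:ℂ) * (κ2:ℂ) := by exact_mod_cast R7
  -- derivatives
  subst hx hy hz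
  have hdx : deriv (fun f : ℝ =>
      (α1 : ℂ) * Complex.cos ((ω0 : ℂ) * f + (φ1 : ℂ))
        + α3 * Complex.cos (Complex.I * (lam0 : ℂ) * f + φ3))
      = fun f : ℝ =>
      (-((α1:ℂ) * (ω0:ℂ))) * Complex.sin ((ω0 : ℂ) * f + (φ1 : ℂ))
        + (-(α3 * (Complex.I * (lam0:ℂ)))) * Complex.sin (Complex.I * (lam0 : ℂ) * f + φ3) :=
    funext fun f => ((key_cos _ _ _ f).add (key_cos α3 (Complex.I * (lam0:ℂ)) φ3 f)).deriv
  have hddx : deriv (fun f : ℝ =>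
      (-((α1:ℂ) * (ω0:ℂ))) * Complex.sin ((ω0 : ℂ) * f + (φ1 : ℂ))
        + (-(α3 * (Complex.I * (lam0:ℂ)))) * Complex.sin (Complex.I * (lam0 : ℂ) * f + φ3))
      = fun f : ℝ =>
      (-((α1:ℂ) * (ω0:ℂ))) * (ω0:ℂ) * Complex.cos ((ω0 : ℂ) * f + (φ1 : ℂ))
        + (-(α3 * (Complex.I * (lam0:ℂ)))) * (Complex.I * (lam0:ℂ))
          * Complex.cos (Complex.I * (lam0 : ℂ) * f + φ3) :=
    funext fun f => ((key_sin _ _ _ f).add (key_sin _ (Complex.I * (lam0:ℂ)) φ3 f)).deriv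
  have hdy : deriv (fun f : ℝ =>
      (κ1 : ℂ) * (α1 : ℂ) * Complex.sin ((ω0 : ℂ) * f + (φ1 : ℂ))
        + Complex.I * (κ2 : ℂ) * α3 * Complex.sin (Complex.I * (lam0 : ℂ) * f + φ3))
      = fun f : ℝ =>
      (κ1 : ℂ) * (α1 : ℂ) * (ω0:ℂ) * Complex.cos ((ω0 : ℂ) * f + (φ1 : ℂ))
        + Complex.I * (κ2 : ℂ) * α3 * (Complex.I * (lam0:ℂ))
          * Complex.cos (Complex.I * (lam0 : ℂ) * f + φ3) :=
    funext fun f => ((key_sin _ _ _ f).add (key_sin _ (Complex.I * (lam0:ℂ)) φ3 f)).deriv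
  have hddy : deriv (fun f : ℝ =>
      (κ1 : ℂ) * (α1 : ℂ) * (ω0:ℂ) * Complex.cos ((ω0 : ℂ) * f + (φ1 : ℂ))
        + Complex.I * (κ2 : ℂ) * α3 * (Complex.I * (lam0:ℂ))
          * Complex.cos (Complex.I * (lam0 : ℂ) * f + φ3))
      = fun f : ℝ =>
      (-((κ1 : ℂ) * (α1 : ℂ) * (ω0:ℂ) * (ω0:ℂ))) * Complex.sin ((ω0 : ℂ) * f + (φ1 : ℂ))
        + (-(Complex.I * (κ2 : ℂ) * α3 * (Complex.I * (lam0:ℂ)) * (Complex.I * (lam0:ℂ))))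
          * Complex.sin (Complex.I * (lam0 : ℂ) * f + φ3) :=
    funext fun f => ((key_cos _ _ _ f).add (key_cos _ (Complex.I * (lam0:ℂ)) φ3 f)).deriv
  have hdz : deriv (fun f : ℝ =>
      (α2 : ℂ) * Complex.sin ((ν0 : ℂ) * f + (φ2 : ℂ))
        + (η : ℂ) * (α1 : ℂ) * Complex.sin ((ω0 : ℂ) * f + (φ1 : ℂ))
        + Complex.I * (η : ℂ) * (κ3 : ℂ) * α3
            * Complex.sin (Complex.I * (lam0 : ℂ) * f + φ3))
      = fun f : ℝ =>
      (α2 : ℂ) * (ν0:ℂ) * Complex.cos ((ν0 : ℂ) * f + (φ2 : ℂ))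
        + (η : ℂ) * (α1 : ℂ) * (ω0:ℂ) * Complex.cos ((ω0 : ℂ) * f + (φ1 : ℂ))
        + Complex.I * (η : ℂ) * (κ3 : ℂ) * α3 * (Complex.I * (lam0:ℂ))
            * Complex.cos (Complex.I * (lam0 : ℂ) * f + φ3) :=
    funext fun f => (((key_sin _ _ _ f).add (key_sin _ _ _ f)).add
      (key_sin _ (Complex.I * (lam0:ℂ)) φ3 f)).deriv
  have hddz : deriv (fun f : ℝ =>
      (α2 : ℂ) * (ν0:ℂ) * Complex.cos ((ν0 : ℂ) * f + (φ2 : ℂ))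
        + (η : ℂ) * (α1 : ℂ) * (ω0:ℂ) * Complex.cos ((ω0 : ℂ) * f + (φ1 : ℂ))
        + Complex.I * (η : ℂ) * (κ3 : ℂ) * α3 * (Complex.I * (lam0:ℂ))
            * Complex.cos (Complex.I * (lam0 : ℂ) * f + φ3))
      = fun f : ℝ =>
      (-((α2 : ℂ) * (ν0:ℂ) * (ν0:ℂ))) * Complex.sin ((ν0 : ℂ) * f + (φ2 : ℂ))
        + (-((η : ℂ) * (α1 : ℂ) * (ω0:ℂ) * (ω0:ℂ))) * Complex.sin ((ω0 : ℂ) * f + (φ1 : ℂ))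
        + (-(Complex.I * (η : ℂ) * (κ3 : ℂ) * α3 * (Complex.I * (lam0:ℂ))
            * (Complex.I * (lam0:ℂ)))) * Complex.sin (Complex.I * (lam0 : ℂ) * f + φ3) :=
    funext fun f => (((key_cos _ _ _ f).add (key_cos _ _ _ f)).add
      (key_cos _ (Complex.I * (lam0:ℂ)) φ3 f)).deriv
  intro f
  refine ⟨?_, ?_, ?_⟩
  · simp only [hdx, hddx, hdy]
    linear_combination (-(α1:ℂ)) * Complex.cos ((ω0:ℂ) * f + (φ1:ℂ)) * C1c
      + α3 * Complex.cos (Complex.I * (lam0:ℂ) * f + φ3) * C2c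
      + (-(α3 * (lam0:ℂ) ^ 2) - 2 * (κ2:ℂ) * (lam0:ℂ) * α3)
        * Complex.cos (Complex.I * (lam0:ℂ) * f + φ3) * Complex.I_sq
  · simp only [hdy, hddy, hdx]
    linear_combination (α1:ℂ) * Complex.sin ((ω0:ℂ) * f + (φ1:ℂ)) * C3c
      + Complex.I * α3 * Complex.sin (Complex.I * (lam0:ℂ) * f + φ3) * C4c
      + (-(Complex.I * (κ2:ℂ) * α3 * (lam0:ℂ) ^ 2))
        * Complex.sin (Complex.I * (lam0:ℂ) * f + φ3) * Complex.I_sq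
  · simp only [hdz, hddz]
    linear_combination (-(α2:ℂ) * Complex.sin ((ν0:ℂ) * f + (φ2:ℂ))
        - (η:ℂ) * (α1:ℂ) * Complex.sin ((ω0:ℂ) * f + (φ1:ℂ))) * C5c
      + (-((η:ℂ) * (α1:ℂ)) * Complex.sin ((ω0:ℂ) * f + (φ1:ℂ))) * C6c
      + Complex.I * (η:ℂ) * α3 * Complex.sin (Complex.I * (lam0:ℂ) * f + φ3) * C7c
      + (-(Complex.I * (η:ℂ) * (κ3:ℂ) * α3 * (lam0:ℂ) ^ 2))
        * Complex.sin (Complex.I * (lam0:ℂ) * f + φ3) * Complex.I_sq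
end

section
/- Let c2 > 1 and define ω0, ν0, λ0, κ1, κ2 as in the linearized ERTBP, and additionally set d0000 = 1/(2ν0) − ν0/2 and κ3 = −1/(2ν0) − 3ν0/2. Let η, α1, α2, φ1, φ2 ∈ ℝ and α3, φ3 ∈ ℂ, and define x(f) = α1·cos(ω0·f + φ1) + η·α2·cos(ν0·f + φ2) + α3·cos(i·λ0·f + φ3), y(f) = κ1·α1·sin(ω0·f + φ1) + η·κ3·α2·sin(ν0·f + φ2) + i·κ2·α3·sin(i·λ0·f + φ3), z(f) = α2·sin(ν0·f + φ2). Then for all f ∈ ℝ: x''(f) − 2y'(f) − (1+2c2)·x(f) = 0, y''(f) + 2x'(f) + (c2−1)·y(f) = η·d0000·z(f), and z''(f) + c2·z(f) = 0. (This is the modified linear solution for the coupling of the z-direction motion into the y-direction, associated with the breaking of the S2-type symmetry.) -/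
private lemma hcos' (a b c : ℂ) (f : ℝ) :
    HasDerivAt (fun t : ℝ => a * Complex.cos (b * t + c))
      ((-(a * b)) * Complex.sin (b * f + c)) f := by
  have h1 : HasDerivAt (fun w : ℂ => a * Complex.cos (b * w + c))
      ((-(a * b)) * Complex.sin (b * (f : ℂ) + c)) (f : ℂ) := by
    have := (((hasDerivAt_id (f : ℂ)).const_mul b).add_const c).ccos.const_mul a
    refine this.congr_deriv ?_
    simp only [id_eq]
    ring
  exact h1.comp_ofReal

private lemma hsin' (a b c : ℂ) (f : ℝ) :
    HasDerivAt (fun t : ℝ => a * Complex.sin (b * t + c))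
      ((a * b) * Complex.cos (b * f + c)) f := by
  have h1 : HasDerivAt (fun w : ℂ => a * Complex.sin (b * w + c))
      ((a * b) * Complex.cos (b * (f : ℂ) + c)) (f : ℂ) := by
    have := (((hasDerivAt_id (f : ℂ)).const_mul b).add_const c).csin.const_mul a
    refine this.congr_deriv ?_
    simp only [id_eq]
    ring
  exact h1.comp_ofReal

/-- The modified linear solution for the coupling of the z-direction motion
into the y-direction (associated with the breaking of the S2-type symmetry)
solves the modified linear system `x'' − 2y' − (1+2c2)x = 0`,
`y'' + 2x' + (c2−1)y = η·d0000·z`, `z'' + c2·z = 0`. -/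
theorem ertbp_modified_linear_solution_z_to_y (c2 : ℝ) (hc2 : 1 < c2)
    (ω0 ν0 lam0 κ1 κ2 κ3 d0000 : ℝ)
    (hω0 : ω0 = Real.sqrt ((2 - c2 + Real.sqrt (9 * c2 ^ 2 - 8 * c2)) / 2))
    (hν0 : ν0 = Real.sqrt c2)
    (hlam0 : lam0 = Real.sqrt ((c2 - 2 + Real.sqrt (9 * c2 ^ 2 - 8 * c2)) / 2))
    (hκ1 : κ1 = -(ω0 ^ 2 + 2 * c2 + 1) / (2 * ω0))
    (hκ2 : κ2 = -(lam0 ^ 2 - 2 * c2 - 1) / (2 * lam0))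
    (hd : d0000 = 1 / (2 * ν0) - ν0 / 2)
    (hκ3 : κ3 = -(1 / (2 * ν0)) - 3 * ν0 / 2)
    (η α1 α2 φ1 φ2 : ℝ) (α3 φ3 : ℂ) (x y z : ℝ → ℂ)
    (hx : x = fun f : ℝ =>
      (α1 : ℂ) * Complex.cos ((ω0 : ℂ) * f + (φ1 : ℂ))
        + (η : ℂ) * (α2 : ℂ) * Complex.cos ((ν0 : ℂ) * f + (φ2 : ℂ))
        + α3 * Complex.cos (Complex.I * (lam0 : ℂ) * f + φ3))
    (hy : y = fun f : ℝ =>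
      (κ1 : ℂ) * (α1 : ℂ) * Complex.sin ((ω0 : ℂ) * f + (φ1 : ℂ))
        + (η : ℂ) * (κ3 : ℂ) * (α2 : ℂ) * Complex.sin ((ν0 : ℂ) * f + (φ2 : ℂ))
        + Complex.I * (κ2 : ℂ) * α3 * Complex.sin (Complex.I * (lam0 : ℂ) * f + φ3))
    (hz : z = fun f : ℝ => (α2 : ℂ) * Complex.sin ((ν0 : ℂ) * f + (φ2 : ℂ))) :
    ∀ f : ℝ,
      deriv (deriv x) f - 2 * deriv y f - (1 + 2 * (c2 : ℂ)) * x f = 0 ∧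
      deriv (deriv y) f + 2 * deriv x f + ((c2 : ℂ) - 1) * y f
        = (η : ℂ) * (d0000 : ℂ) * z f ∧
      deriv (deriv z) f + (c2 : ℂ) * z f = 0 := by
  -- real algebraic facts
  set s := Real.sqrt (9 * c2 ^ 2 - 8 * c2) with hsdef
  have hs0 : (0:ℝ) ≤ s := Real.sqrt_nonneg _
  have hs2 : s ^ 2 = 9 * c2 ^ 2 - 8 * c2 := Real.sq_sqrt (by nlinarith)
  have hω0sq : ω0 ^ 2 = (2 - c2 + s) / 2 := by
    rw [hω0]; exact Real.sq_sqrt (by nlinarith)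
  have hlam0sq : lam0 ^ 2 = (c2 - 2 + s) / 2 := by
    rw [hlam0]; exact Real.sq_sqrt (by nlinarith)
  have hν0sq : ν0 ^ 2 = c2 := by rw [hν0]; exact Real.sq_sqrt (by linarith)
  have hω0ne : ω0 ≠ 0 := by intro h; rw [h] at hω0sq; nlinarith
  have hlamne : lam0 ≠ 0 := by intro h; rw [h] at hlam0sq; nlinarith
  have hνne : ν0 ≠ 0 := by intro h; rw [h] at hν0sq; nlinarith
  have hq1 : ω0 ^ 4 + (c2 - 2) * ω0 ^ 2 - (2 * c2 + 1) * (c2 - 1) = 0 := by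
    linear_combination (ω0 ^ 2 + (2 - c2 + s) / 2 + (c2 - 2)) * hω0sq + (1/4) * hs2
  have hq3 : lam0 ^ 4 + (2 - c2) * lam0 ^ 2 - (2 * c2 + 1) * (c2 - 1) = 0 := by
    linear_combination (lam0 ^ 2 + (c2 - 2 + s) / 2 + (2 - c2)) * hlam0sq + (1/4) * hs2
  have A1 : -ω0 ^ 2 - 2 * (κ1 * ω0) - (1 + 2 * c2) = 0 := by
    rw [hκ1]; field_simp; ring
  have A2 : -ν0 ^ 2 - 2 * (κ3 * ν0) - (1 + 2 * c2) = 0 := by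
    rw [hκ3]; field_simp; linear_combination 2 * hν0sq
  have A3 : lam0 ^ 2 + 2 * (κ2 * lam0) - (1 + 2 * c2) = 0 := by
    rw [hκ2]; field_simp; ring
  have B1 : -(κ1 * ω0 ^ 2) - 2 * ω0 + (c2 - 1) * κ1 = 0 := by
    rw [hκ1]; field_simp; linear_combination hq1
  have B2 : -(κ3 * ν0 ^ 2) - 2 * ν0 + (c2 - 1) * κ3 = d0000 := by
    rw [hκ3, hd]; field_simp; linear_combination (3 * ν0 ^ 2 + 1) * hν0sq
  have B3 : κ2 * lam0 ^ 2 - 2 * lam0 + (c2 - 1) * κ2 = 0 := by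
    rw [hκ2]; field_simp; linear_combination (-1 : ℝ) * hq3
  -- complex casts
  have A1c := congrArg (fun r : ℝ => (r : ℂ)) A1; push_cast at A1c
  have A2c := congrArg (fun r : ℝ => (r : ℂ)) A2; push_cast at A2c
  have A3c := congrArg (fun r : ℝ => (r : ℂ)) A3; push_cast at A3c
  have B1c := congrArg (fun r : ℝ => (r : ℂ)) B1; push_cast at B1c
  have B2c := congrArg (fun r : ℝ => (r : ℂ)) B2; push_cast at B2c
  have B3c := congrArg (fun r : ℝ => (r : ℂ)) B3; push_cast at B3c
  have Cc : ((ν0 : ℂ)) ^ 2 = (c2 : ℂ) := by exact_mod_cast congrArg (fun r : ℝ => (r : ℂ)) hν0sq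
  -- derivatives
  have Dx : deriv x = fun f : ℝ =>
      (-((α1 : ℂ) * (ω0 : ℂ))) * Complex.sin ((ω0 : ℂ) * f + (φ1 : ℂ))
        + (-((η : ℂ) * (α2 : ℂ) * (ν0 : ℂ))) * Complex.sin ((ν0 : ℂ) * f + (φ2 : ℂ))
        + (-(α3 * (Complex.I * (lam0 : ℂ)))) * Complex.sin (Complex.I * (lam0 : ℂ) * f + φ3) := by
    funext f; rw [hx]
    exact (((hcos' (α1 : ℂ) (ω0 : ℂ) (φ1 : ℂ) f).add
      (hcos' ((η : ℂ) * (α2 : ℂ)) (ν0 : ℂ) (φ2 : ℂ) f)).add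
      (hcos' α3 (Complex.I * (lam0 : ℂ)) φ3 f)).deriv
  have Dx2 : deriv (deriv x) = fun f : ℝ =>
      ((-((α1 : ℂ) * (ω0 : ℂ))) * (ω0 : ℂ)) * Complex.cos ((ω0 : ℂ) * f + (φ1 : ℂ))
        + ((-((η : ℂ) * (α2 : ℂ) * (ν0 : ℂ))) * (ν0 : ℂ)) * Complex.cos ((ν0 : ℂ) * f + (φ2 : ℂ))
        + ((-(α3 * (Complex.I * (lam0 : ℂ)))) * (Complex.I * (lam0 : ℂ)))
            * Complex.cos (Complex.I * (lam0 : ℂ) * f + φ3) := by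
    funext f; rw [Dx]
    exact (((hsin' (-((α1 : ℂ) * (ω0 : ℂ))) (ω0 : ℂ) (φ1 : ℂ) f).add
      (hsin' (-((η : ℂ) * (α2 : ℂ) * (ν0 : ℂ))) (ν0 : ℂ) (φ2 : ℂ) f)).add
      (hsin' (-(α3 * (Complex.I * (lam0 : ℂ)))) (Complex.I * (lam0 : ℂ)) φ3 f)).deriv
  have Dy : deriv y = fun f : ℝ =>
      ((κ1 : ℂ) * (α1 : ℂ) * (ω0 : ℂ)) * Complex.cos ((ω0 : ℂ) * f + (φ1 : ℂ))
        + ((η : ℂ) * (κ3 : ℂ) * (α2 : ℂ) * (ν0 : ℂ)) * Complex.cos ((ν0 : ℂ) * f + (φ2 : ℂ))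
        + ((Complex.I * (κ2 : ℂ) * α3) * (Complex.I * (lam0 : ℂ)))
            * Complex.cos (Complex.I * (lam0 : ℂ) * f + φ3) := by
    funext f; rw [hy]
    exact (((hsin' ((κ1 : ℂ) * (α1 : ℂ)) (ω0 : ℂ) (φ1 : ℂ) f).add
      (hsin' ((η : ℂ) * (κ3 : ℂ) * (α2 : ℂ)) (ν0 : ℂ) (φ2 : ℂ) f)).add
      (hsin' (Complex.I * (κ2 : ℂ) * α3) (Complex.I * (lam0 : ℂ)) φ3 f)).deriv
  have Dy2 : deriv (deriv y) = fun f : ℝ =>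
      (-((κ1 : ℂ) * (α1 : ℂ) * (ω0 : ℂ) * (ω0 : ℂ))) * Complex.sin ((ω0 : ℂ) * f + (φ1 : ℂ))
        + (-((η : ℂ) * (κ3 : ℂ) * (α2 : ℂ) * (ν0 : ℂ) * (ν0 : ℂ)))
            * Complex.sin ((ν0 : ℂ) * f + (φ2 : ℂ))
        + (-((Complex.I * (κ2 : ℂ) * α3) * (Complex.I * (lam0 : ℂ)) * (Complex.I * (lam0 : ℂ))))
            * Complex.sin (Complex.I * (lam0 : ℂ) * f + φ3) := by
    funext f; rw [Dy]
    exact (((hcos' ((κ1 : ℂ) * (α1 : ℂ) * (ω0 : ℂ)) (ω0 : ℂ) (φ1 : ℂ) f).add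
      (hcos' ((η : ℂ) * (κ3 : ℂ) * (α2 : ℂ) * (ν0 : ℂ)) (ν0 : ℂ) (φ2 : ℂ) f)).add
      (hcos' ((Complex.I * (κ2 : ℂ) * α3) * (Complex.I * (lam0 : ℂ)))
        (Complex.I * (lam0 : ℂ)) φ3 f)).deriv
  have Dz : deriv z = fun f : ℝ =>
      ((α2 : ℂ) * (ν0 : ℂ)) * Complex.cos ((ν0 : ℂ) * f + (φ2 : ℂ)) := by
    funext f; rw [hz]
    exact (hsin' (α2 : ℂ) (ν0 : ℂ) (φ2 : ℂ) f).deriv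
  have Dz2 : deriv (deriv z) = fun f : ℝ =>
      (-((α2 : ℂ) * (ν0 : ℂ) * (ν0 : ℂ))) * Complex.sin ((ν0 : ℂ) * f + (φ2 : ℂ)) := by
    funext f; rw [Dz]
    exact (hcos' ((α2 : ℂ) * (ν0 : ℂ)) (ν0 : ℂ) (φ2 : ℂ) f).deriv
  intro f
  set C1 := Complex.cos ((ω0 : ℂ) * f + (φ1 : ℂ)) with hC1
  set C2 := Complex.cos ((ν0 : ℂ) * f + (φ2 : ℂ)) with hC2
  set C3 := Complex.cos (Complex.I * (lam0 : ℂ) * f + φ3) with hC3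
  set S1 := Complex.sin ((ω0 : ℂ) * f + (φ1 : ℂ)) with hS1
  set S2 := Complex.sin ((ν0 : ℂ) * f + (φ2 : ℂ)) with hS2
  set S3 := Complex.sin (Complex.I * (lam0 : ℂ) * f + φ3) with hS3
  refine ⟨?_, ?_, ?_⟩
  · rw [Dx2, Dy, hx]; simp only []
    linear_combination ((α1 : ℂ) * C1) * A1c + (((η : ℂ) * (α2 : ℂ)) * C2) * A2c
      + (α3 * C3) * A3c
      + ((-(α3 * (lam0 : ℂ) ^ 2) - 2 * (κ2 : ℂ) * α3 * (lam0 : ℂ)) * C3) * Complex.I_sq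
  · rw [Dy2, Dx, hy, hz]; simp only []
    linear_combination ((α1 : ℂ) * S1) * B1c + (((η : ℂ) * (α2 : ℂ)) * S2) * B2c
      + (Complex.I * α3 * S3) * B3c
      + ((-(Complex.I * (κ2 : ℂ) * α3 * (lam0 : ℂ) ^ 2)) * S3) * Complex.I_sq
  · rw [Dz2, hz]; simp only []
    linear_combination (-((α2 : ℂ) * S2)) * Cc
end
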